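/- If z ∈ K satisfies z² = f(x + a) (the image in K of the polynomial f(X + a) ∈ k[X]), then f(X + a) = f(X) in k[X], and z = y or z = −y. (This expresses that any automorphism τ of the hyperelliptic curve inducing x ↦ x + a on P¹ satisfies τ*(y) = ±y.) -/

import Mathlib

set_option maxHeartbeats 1600000


open Polynomial


lemma aux_key {k : Type} [Field k] [IsAlgClosed k] {g : k[X]} (hg : Squarefree g)
    (hdeg : g.natDegree ≠ 0) {α β : k[X]} (hβ : β ≠ 0) (h : g * β ^ 2 = α ^ 2) : False := by
  have hg0 : g ≠ 0 := hg.ne_zero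
  obtain ⟨c, hc⟩ : ∃ c, g.IsRoot c := by
    exact IsAlgClosed.exists_root g (by
      intro hdg
      exact hdeg (natDegree_eq_zero_iff_degree_le_zero.mpr (le_of_eq hdg)))
  have hα : α ≠ 0 := by
    intro h0
    rw [h0] at h
    simp only [ne_eq, zero_pow, OfNat.ofNat_ne_zero, not_false_eq_true] at h
    exact (mul_ne_zero hg0 (pow_ne_zero 2 hβ)) h
  have hrmg : g.rootMultiplicity c = 1 := by
    have h1 : 1 ≤ g.rootMultiplicity c := (rootMultiplicity_pos hg0).mpr hc
    have h2 : g.rootMultiplicity c ≤ 1 := by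
      by_contra hlt
      push_neg at hlt
      have : (X - C c) ^ 2 ∣ g :=
        dvd_trans (pow_dvd_pow _ hlt) (pow_rootMultiplicity_dvd g c)
      have := hg (X - C c) (by rwa [← sq])
      exact (not_isUnit_X_sub_C c) this
    omega
  have hL : (g * β ^ 2).rootMultiplicity c = 1 + 2 * β.rootMultiplicity c := by
    rw [rootMultiplicity_mul (mul_ne_zero hg0 (pow_ne_zero 2 hβ)), hrmg, sq,
      rootMultiplicity_mul (mul_ne_zero hβ hβ)]
    ring
  have hR : (α ^ 2).rootMultiplicity c = 2 * α.rootMultiplicity c := by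
    rw [sq, rootMultiplicity_mul (mul_ne_zero hα hα)]
    ring
  rw [h, hR] at hL
  omega

lemma aux_sqfree_comp {k : Type} [Field k] {f : k[X]} (hf : Squarefree f) (a : k) :
    Squarefree (f.comp (X + C a)) := by
  intro u hu
  obtain ⟨v, hv⟩ := hu
  have hcomp : f = (u.comp (X - C a)) * (u.comp (X - C a)) * (v.comp (X - C a)) := by
    have := congrArg (fun q => q.comp (X - C a)) hv
    simp only [mul_comp, comp_assoc, add_comp, X_comp, C_comp, sub_add_cancel, comp_X] at this
    simpa using this
  have := hf (u.comp (X - C a)) ⟨v.comp (X - C a), hcomp⟩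
  obtain ⟨c, hcu, hcC⟩ := Polynomial.isUnit_iff.mp this
  have : u = C c := by
    have := congrArg (fun q => q.comp (X + C a)) hcC
    simp only [C_comp, comp_assoc, sub_comp, add_comp, X_comp, C_comp, add_sub_cancel_right,
      comp_X] at this
    exact this.symm
  rw [this]
  exact isUnit_C.mpr hcu


/-- The defining polynomial `Y² − f(X)`, as a polynomial in `Y` over `k[X]`. -/
noncomputable def oddPoly {k : Type} [Field k] (f : k[X]) : Polynomial (Polynomial k) :=
  X ^ 2 - C f

/-- The affine coordinate ring `k[X][Y]/(Y² − f(X))`. -/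
abbrev OddRing {k : Type} [Field k] (f : k[X]) : Type :=
  AdjoinRoot (oddPoly f)

/-- Let `k` be algebraically closed of characteristic `p ≥ 3`, `f` monic
squarefree of degree `≥ 3`, `K` the fraction field of `k[X][Y]/(Y² − f(X))`, and `a ≠ 0`.
If `z ∈ K` satisfies `z² = f(x + a)`, then `f(X + a) = f(X)` in `k[X]` and `z = y` or
`z = −y`. -/
theorem statement7 {k : Type} [Field k] [IsAlgClosed k] (p : ℕ) [CharP k p] (hp : 3 ≤ p)
    (f : k[X]) (hmonic : f.Monic) (hsqf : Squarefree f) (hdeg : 3 ≤ f.natDegree)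
    (K : Type) [Field K] [Algebra k K] [Algebra (OddRing f) K]
    [IsScalarTower k (OddRing f) K] [IsFractionRing (OddRing f) K]
    (x y : K)
    (hx : x = algebraMap (OddRing f) K (AdjoinRoot.of (oddPoly f) X))
    (hy : y = algebraMap (OddRing f) K (AdjoinRoot.root (oddPoly f)))
    (a : k) (ha : a ≠ 0)
    (z : K) (hz : z ^ 2 = aeval x (f.comp (X + C a))) :
    f.comp (X + C a) = f ∧ (z = y ∨ z = -y) := by
  set g : k[X] := f.comp (X + C a) with hgdef
  have hf0 : f ≠ 0 := hsqf.ne_zero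
  have hfnd : f.natDegree ≠ 0 := by omega
  have hgmonic : g.Monic := hmonic.comp_X_add_C a
  have hgsqf : Squarefree g := aux_sqfree_comp hsqf a
  have hgnd : g.natDegree ≠ 0 := by
    rw [hgdef, natDegree_comp, natDegree_X_add_C, mul_one]; exact hfnd
  have hg0 : g ≠ 0 := hgsqf.ne_zero
  -- basic structure
  have hmo : (oddPoly f).Monic := monic_X_pow_sub_C f (by norm_num)
  have hdeg2 : (oddPoly f).degree = 2 := by
    simpa [oddPoly] using degree_X_pow_sub_C (by norm_num : 0 < 2) f
  set w : OddRing f := AdjoinRoot.root (oddPoly f) with hwdef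
  set ofA : k[X] →+* OddRing f := AdjoinRoot.of (oddPoly f) with hofA
  set ψ : OddRing f →+* K := algebraMap (OddRing f) K with hψ
  set Φ : k[X] →+* K := ψ.comp ofA with hΦ
  have hofinj : Function.Injective ofA := by
    intro u v huv
    have h : AdjoinRoot.mk (oddPoly f) (C (u - v)) = 0 := by
      rw [C_sub, map_sub, AdjoinRoot.mk_C, AdjoinRoot.mk_C]
      exact sub_eq_zero.mpr huv
    rw [AdjoinRoot.mk_eq_zero] at h
    have hd : (C (u - v) : (Polynomial k)[X]).degree < (oddPoly f).degree := by
      rw [hdeg2]; exact lt_of_le_of_lt degree_C_le (by norm_num)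
    exact sub_eq_zero.mp (C_eq_zero.mp (eq_zero_of_dvd_of_degree_lt h hd))
  have hψinj : Function.Injective ψ := IsFractionRing.injective (OddRing f) K
  have hΦinj : Function.Injective Φ := hψinj.comp hofinj
  have hw2 : w ^ 2 = ofA f := by
    have h : AdjoinRoot.mk (oddPoly f) (X ^ 2 - C f) = 0 := AdjoinRoot.mk_self
    rw [map_sub, map_pow, AdjoinRoot.mk_X, AdjoinRoot.mk_C] at h
    exact sub_eq_zero.mp h
  have hy2 : y ^ 2 = Φ f := by
    rw [hy, hΦ, RingHom.comp_apply, ← map_pow]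
    exact congrArg ψ hw2
  -- aeval x = Φ
  have haev : ∀ h : k[X], aeval x h = Φ h := by
    have hext : ((aeval x : k[X] →ₐ[k] K) : k[X] →+* K) = Φ := by
      apply Polynomial.ringHom_ext
      · intro c
        have h2 : Φ (C c) = algebraMap k K c := by
          rw [IsScalarTower.algebraMap_apply k (OddRing f) K c]
          rfl
        rw [RingHom.coe_coe, aeval_C, h2]
      · rw [RingHom.coe_coe, aeval_X, hx]; rfl
    intro h
    exact congrFun (congrArg (fun (F : k[X] →+* K) => F.toFun) hext) h
  -- linear independence of 1, y over k[X] (inside K)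
  have hindep : ∀ α β : k[X], Φ α + Φ β * y = 0 → α = 0 ∧ β = 0 := by
    intro α β h
    rcases eq_or_ne β 0 with hb | hb
    · subst hb
      rw [map_zero, zero_mul, add_zero] at h
      exact ⟨hΦinj (by simpa using h), rfl⟩
    · exfalso
      have heq : Φ (f * β ^ 2) = Φ (α ^ 2) := by
        simp only [map_mul, map_pow]
        linear_combination (Φ β * y - Φ α) * h - (Φ β) ^ 2 * hy2
      exact aux_key hsqf hfnd hb (hΦinj heq)
  -- representation of z as a fraction
  obtain ⟨A, B, hBmem, hzeq⟩ := IsFractionRing.div_surjective (A := OddRing f) z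
  have hrepr : ∀ u : OddRing f, ∃ p q : k[X], u = ofA p + ofA q * w := by
    intro u
    obtain ⟨P, rfl⟩ := AdjoinRoot.mk_surjective u
    have hdegP : (P %ₘ oddPoly f).degree ≤ 1 := by
      have h := degree_modByMonic_lt P hmo
      rw [hdeg2] at h
      exact Order.le_of_lt_succ (by exact_mod_cast h)
    obtain ⟨c0, c1, hR⟩ : ∃ c0 c1, P %ₘ oddPoly f = C c1 * X + C c0 :=
      ⟨(P %ₘ oddPoly f).coeff 0, (P %ₘ oddPoly f).coeff 1, eq_X_add_C_of_degree_le_one hdegP⟩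
    refine ⟨c0, c1, ?_⟩
    conv_lhs => rw [← modByMonic_add_div P (oddPoly f)]
    rw [hR, map_add, map_add, map_mul, map_mul, AdjoinRoot.mk_C, AdjoinRoot.mk_C,
      AdjoinRoot.mk_X, AdjoinRoot.mk_self, zero_mul, add_zero, add_comm]
  obtain ⟨pA, qA, hA⟩ := hrepr A
  obtain ⟨r, t, hB⟩ := hrepr B
  haveI : Nontrivial (OddRing f) := ψ.domain_nontrivial
  have hψB : ψ B ≠ 0 := IsFractionRing.to_map_ne_zero_of_mem_nonZeroDivisors hBmem
  -- M and the conjugate trick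
  set M : k[X] := r ^ 2 - t ^ 2 * f with hMdef
  set B' : OddRing f := ofA r - ofA t * w with hB'def
  have hBB' : B * B' = ofA M := by
    rw [hB, hB'def, hMdef]
    simp only [map_sub, map_mul, map_pow]
    linear_combination (-(ofA t)^2) * hw2
  have hAB' : A * B' = ofA (pA * r - qA * t * f) + ofA (qA * r - pA * t) * w := by
    rw [hA, hB'def]
    simp only [map_sub, map_mul]
    linear_combination (-(ofA qA * ofA t)) * hw2
  set p₁ : k[X] := pA * r - qA * t * f with hp₁def
  set q₁ : k[X] := qA * r - pA * t with hq₁def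
  have hM0 : M ≠ 0 := by
    intro hM
    have hM' : r ^ 2 - t ^ 2 * f = 0 := by rw [← hMdef]; exact hM
    rcases eq_or_ne t 0 with ht | ht
    · apply hψB
      have hr : r = 0 := by
        have hr2 : r ^ 2 = 0 := by rw [ht] at hM'; linear_combination hM'
        exact pow_eq_zero_iff (two_ne_zero) |>.mp hr2
      rw [hB, hr, ht]; simp
    · have : f * t ^ 2 = r ^ 2 := by linear_combination -hM'
      exact aux_key hsqf hfnd ht this
  have hΦM : Φ M ≠ 0 := fun h => hM0 (hΦinj (by simpa using h))
  -- the key equation in K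
  have hzM : z * Φ M = Φ p₁ + Φ q₁ * y := by
    have h1 : z * ψ B = ψ A := by
      rw [← hzeq, div_mul_cancel₀ _ hψB]
    have h2 : z * ψ (B * B') = ψ (A * B') := by
      rw [map_mul, map_mul, ← mul_assoc, h1]
    rw [hBB', hAB'] at h2
    rw [map_add, map_mul] at h2
    rw [hΦ]
    simpa [hy, hψ] using h2
  -- squaring
  have hzg : z ^ 2 = Φ g := by rw [hz, haev]
  have hkey : Φ (p₁ ^ 2 + q₁ ^ 2 * f - g * M ^ 2) + Φ (2 * p₁ * q₁) * y = 0 := by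
    simp only [map_sub, map_add, map_mul, map_pow, map_ofNat]
    linear_combination (Φ M) ^ 2 * hzg - (Φ q₁) ^ 2 * hy2 - (z * Φ M + Φ p₁ + Φ q₁ * y) * hzM
  obtain ⟨hα, hβ⟩ := hindep _ _ hkey
  -- char ≠ 2
  have h2k : (2 : k[X]) ≠ 0 := by
    intro h2
    have : (2 : k) = 0 := by
      have := congrArg (fun q : k[X] => q.coeff 0) h2
      simpa using this
    rw [show (2 : k) = ((2 : ℕ) : k) by norm_num, CharP.cast_eq_zero_iff k p 2] at this
    have := Nat.le_of_dvd (by norm_num) this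
    omega
  have hpq : p₁ = 0 ∨ q₁ = 0 := by
    rcases mul_eq_zero.mp hβ with h | h
    · rcases mul_eq_zero.mp h with h | h
      · exact absurd h h2k
      · exact Or.inl h
    · exact Or.inr h
  have hαeq : p₁ ^ 2 + q₁ ^ 2 * f = g * M ^ 2 := by linear_combination hα
  rcases hpq with hp₁ | hq₁
  · -- p₁ = 0 : main case
    rw [hp₁] at hαeq
    simp only [ne_eq, OfNat.ofNat_ne_zero, not_false_eq_true, zero_pow, zero_add] at hαeq
    -- hαeq : q₁ ^ 2 * f = g * M ^ 2
    have hq₁0 : q₁ ≠ 0 := by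
      intro h0
      rw [h0] at hαeq
      simp only [ne_eq, OfNat.ofNat_ne_zero, not_false_eq_true, zero_pow, zero_mul] at hαeq
      exact mul_ne_zero hg0 (pow_ne_zero 2 hM0) hαeq.symm
    -- show g = f
    have hdvd : M ∣ f * q₁ := by
      rw [← IsIntegrallyClosed.pow_dvd_pow_iff (two_ne_zero)]
      exact ⟨f * g, by linear_combination f * hαeq⟩
    obtain ⟨e, he⟩ := hdvd
    have he2 : e ^ 2 = f * g := by
      have hM2 : M ^ 2 ≠ 0 := pow_ne_zero 2 hM0
      have : M ^ 2 * e ^ 2 = M ^ 2 * (f * g) := by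
        have := congrArg (fun q => q * q) he
        linear_combination f * hαeq - this
      exact mul_left_cancel₀ hM2 this
    have hfe : f ∣ e := (hsqf.dvd_pow_iff_dvd two_ne_zero).mp ⟨g, he2⟩
    obtain ⟨u, hu⟩ := hfe
    have hgu : g = f * u ^ 2 := by
      have : f * g = f * (f * u ^ 2) := by
        rw [← he2, hu]; ring
      exact mul_left_cancel₀ hf0 this
    have huunit : IsUnit u := hgsqf u ⟨f, by rw [hgu]; ring⟩
    obtain ⟨c, hcu, hcC⟩ := Polynomial.isUnit_iff.mp huunit
    have hc2 : c ^ 2 = 1 := by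
      have h1 : g.leadingCoeff = 1 := hgmonic
      rw [hgu, ← hcC] at h1
      rw [← C_pow] at h1
      rw [leadingCoeff_mul, leadingCoeff_C, hmonic.leadingCoeff, one_mul] at h1
      exact h1
    have hgf : g = f := by
      rw [hgu, ← hcC, ← C_pow, hc2, map_one, mul_one]
    refine ⟨hgf, ?_⟩
    -- now q₁² = M²
    have hq₁M : q₁ ^ 2 = M ^ 2 := by
      rw [hgf] at hαeq
      have : f * q₁ ^ 2 = f * M ^ 2 := by linear_combination hαeq
      exact mul_left_cancel₀ hf0 this
    have : (q₁ - M) * (q₁ + M) = 0 := by linear_combination hq₁M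
    rcases mul_eq_zero.mp this with h | h
    · left
      have hq : q₁ = M := by linear_combination h
      have := hzM
      rw [hp₁, map_zero, zero_add, hq] at this
      exact mul_right_cancel₀ hΦM (by rw [this]; ring)
    · right
      have hq : q₁ = -M := by linear_combination h
      have := hzM
      rw [hp₁, map_zero, zero_add, hq, map_neg] at this
      have : z * Φ M = -y * Φ M := by rw [this]; ring
      exact mul_right_cancel₀ hΦM this
  · -- q₁ = 0 : impossible
    exfalso
    rw [hq₁] at hαeq
    simp only [ne_eq, OfNat.ofNat_ne_zero, not_false_eq_true, zero_pow, zero_mul,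
      add_zero] at hαeq
    exact aux_key hgsqf hgnd hM0 hαeq.symm
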